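/- Let f : ℝ^d → ℝ be continuously differentiable with ξ ≤ f(x) ≤ ζ for all x (where 0 < ξ ≤ ζ), and suppose |f(x) - f(y)| ≤ γ‖x - y‖₂ and ‖∇f(x) - ∇f(y)‖₂ ≤ γ‖x - y‖₂ for all x, y. Fix σ ∈ (0,1], t ∈ [0,1], x ∈ ℝ^d, and let Z₁, …, Z_m be i.i.d. N(0, I_d) random vectors. Define b(x,t) = E_{Z∼N(0,I_d)}[∇f(x + √((1-t)σ) Z)] / E_{Z∼N(0,I_d)}[f(x + √((1-t)σ) Z)] and the Monte Carlo estimator b̃_m(x,t) = ( m^{-1} Σ_{j=1}^m ∇f(x + √((1-t)σ) Z_j) ) / ( m^{-1} Σ_{j=1}^m f(x + √((1-t)σ) Z_j) ). Then E[ ‖b(x,t) - b̃_m(x,t)‖₂² ] ≤ (4d/m) · ( γ⁴/ξ⁴ + γ²ζ²/ξ⁴ ), uniformly in x ∈ ℝ^d and t ∈ [0,1]. -/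

import Mathlib

open MeasureTheory Real Filter Set ProbabilityTheory

/-- The standard Gaussian measure `N(0, I_d)` on `ℝ^d`, defined through its density
with respect to Lebesgue measure. -/
noncomputable def stdGaussian (d : ℕ) : Measure (EuclideanSpace ℝ (Fin d)) :=
  volume.withDensity fun z =>
    ENNReal.ofReal ((2 * π) ^ (-(d : ℝ) / 2) * Real.exp (-‖z‖ ^ 2 / 2))

/-- The Schrödinger–Föllmer drift
`b(x,t) = E[∇f(x + √((1-t)σ) Z)] / E[f(x + √((1-t)σ) Z)]`, `Z ∼ N(0, I_d)`. -/
noncomputable def driftSF {d : ℕ} (f : EuclideanSpace ℝ (Fin d) → ℝ) (σ : ℝ)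
    (x : EuclideanSpace ℝ (Fin d)) (t : ℝ) : EuclideanSpace ℝ (Fin d) :=
  (∫ z, f (x + Real.sqrt ((1 - t) * σ) • z) ∂(stdGaussian d))⁻¹ •
    ∫ z, gradient f (x + Real.sqrt ((1 - t) * σ) • z) ∂(stdGaussian d)

section Aux

lemma integrable_gauss (d : ℕ) :
    Integrable (fun z : EuclideanSpace ℝ (Fin d) => Real.exp (-‖z‖ ^ 2 / 2)) := by
  have h := (GaussianFourier.integrable_cexp_neg_mul_sq_norm_add
    (V := EuclideanSpace ℝ (Fin d)) (b := (1/2 : ℂ)) (by norm_num) 0 0).norm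
  refine h.congr (Filter.Eventually.of_forall fun z => ?_)
  show ‖Complex.exp _‖ = _
  rw [Complex.norm_exp]
  congr 1
  simp [← Complex.ofReal_pow]
  ring

lemma stdGaussian_isProb (d : ℕ) : IsProbabilityMeasure (stdGaussian d) := by
  constructor
  rw [_root_.stdGaussian, withDensity_apply _ MeasurableSet.univ, Measure.restrict_univ]
  have hint : Integrable (fun z : EuclideanSpace ℝ (Fin d) =>
      (2 * π) ^ (-(d : ℝ) / 2) * Real.exp (-‖z‖ ^ 2 / 2)) :=
    (integrable_gauss d).const_mul _
  rw [← ofReal_integral_eq_lintegral_ofReal hint (Filter.Eventually.of_forall fun z => by positivity)]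
  rw [integral_const_mul]
  have hval : ∫ z : EuclideanSpace ℝ (Fin d), Real.exp (-‖z‖ ^ 2 / 2)
      = (2 * π) ^ ((d : ℝ) / 2) := by
    have h := GaussianFourier.integral_rexp_neg_mul_sq_norm
      (V := EuclideanSpace ℝ (Fin d)) (b := 1/2) (by norm_num)
    have e : (fun z : EuclideanSpace ℝ (Fin d) => Real.exp (-‖z‖ ^ 2 / 2))
        = fun z => Real.exp (-(1/2) * ‖z‖^2) := funext fun z => by congr 1; ring
    rw [e, h, finrank_euclideanSpace_fin, show (π/(1/2:ℝ)) = 2*π by ring]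
  rw [hval, ← Real.rpow_add (by positivity)]
  have : (-(d:ℝ)/2 + (d:ℝ)/2) = 0 := by ring
  rw [this, Real.rpow_zero, ENNReal.ofReal_one]

lemma ratio_bound {E : Type*} [NormedAddCommGroup E] [InnerProductSpace ℝ E]
    (A Y : E) (B B' ξ γ : ℝ) (hξ : 0 < ξ) (hB : ξ ≤ B) (hB' : ξ ≤ B')
    (hY : ‖Y‖ ≤ γ) :
    ‖B⁻¹ • A - B'⁻¹ • Y‖ ^ 2 ≤
      2 * ξ⁻¹ ^ 2 * ‖Y - A‖ ^ 2 + 2 * γ ^ 2 * ξ⁻¹ ^ 4 * (B' - B) ^ 2 := by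
  have hB0 : 0 < B := lt_of_lt_of_le hξ hB
  have hB'0 : 0 < B' := lt_of_lt_of_le hξ hB'
  have hγ0 : 0 ≤ γ := le_trans (norm_nonneg Y) hY
  have hsplit : B⁻¹ • A - B'⁻¹ • Y = B⁻¹ • (A - Y) + (B⁻¹ - B'⁻¹) • Y := by
    rw [smul_sub, sub_smul]; abel
  have h1 : ‖B⁻¹ • (A - Y)‖ ≤ ξ⁻¹ * ‖Y - A‖ := by
    rw [norm_smul, Real.norm_eq_abs, abs_of_pos (inv_pos.2 hB0), norm_sub_rev]
    exact mul_le_mul_of_nonneg_right (inv_anti₀ hξ hB) (norm_nonneg _)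
  have h2 : ‖(B⁻¹ - B'⁻¹) • Y‖ ≤ (|B' - B| * ξ⁻¹ ^ 2) * γ := by
    rw [norm_smul, Real.norm_eq_abs]
    have he : B⁻¹ - B'⁻¹ = (B' - B) * (B⁻¹ * B'⁻¹) := by field_simp
    have habs : |B⁻¹ - B'⁻¹| ≤ |B' - B| * ξ⁻¹ ^ 2 := by
      rw [he, abs_mul]
      have : |B⁻¹ * B'⁻¹| ≤ ξ⁻¹ ^ 2 := by
        rw [abs_mul, abs_of_pos (inv_pos.2 hB0), abs_of_pos (inv_pos.2 hB'0), sq]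
        exact mul_le_mul (inv_anti₀ hξ hB) (inv_anti₀ hξ hB')
          (le_of_lt (inv_pos.2 hB'0)) (le_of_lt (inv_pos.2 hξ))
      exact mul_le_mul_of_nonneg_left this (abs_nonneg _)
    exact mul_le_mul habs hY (norm_nonneg _) (by positivity)
  have hn : ‖B⁻¹ • A - B'⁻¹ • Y‖ ≤ ξ⁻¹ * ‖Y - A‖ + (|B' - B| * ξ⁻¹ ^ 2) * γ := by
    rw [hsplit]
    exact le_trans (norm_add_le _ _) (add_le_add h1 h2)
  have hnn : (0:ℝ) ≤ ‖B⁻¹ • A - B'⁻¹ • Y‖ := norm_nonneg _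
  calc ‖B⁻¹ • A - B'⁻¹ • Y‖ ^ 2
      ≤ (ξ⁻¹ * ‖Y - A‖ + (|B' - B| * ξ⁻¹ ^ 2) * γ) ^ 2 := pow_le_pow_left₀ hnn hn 2
    _ ≤ 2 * (ξ⁻¹ * ‖Y - A‖) ^ 2 + 2 * ((|B' - B| * ξ⁻¹ ^ 2) * γ) ^ 2 := by
        nlinarith [sq_nonneg (ξ⁻¹ * ‖Y - A‖ - (|B' - B| * ξ⁻¹ ^ 2) * γ)]
    _ = 2 * ξ⁻¹ ^ 2 * ‖Y - A‖ ^ 2 + 2 * γ ^ 2 * ξ⁻¹ ^ 4 * (B' - B) ^ 2 := by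
        rw [mul_pow, mul_pow, mul_pow, sq_abs]; ring

lemma sum_var_bound {Ω : Type*} [MeasurableSpace Ω] (P : Measure Ω) [IsProbabilityMeasure P]
    {E : Type*} [NormedAddCommGroup E] [InnerProductSpace ℝ E] (m : ℕ)
    (V : Fin m → Ω → E) (C K : ℝ) (hC : 0 ≤ C) (hK : 0 ≤ K)
    (hmeas : ∀ j, AEStronglyMeasurable (V j) P)
    (hbdd : ∀ j ω, ‖V j ω‖ ≤ C)
    (hdiag : ∀ i, ∫ ω, ‖V i ω‖ ^ 2 ∂P ≤ K ^ 2)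
    (hcross : ∀ i j, i ≠ j → ∫ ω, (inner ℝ (V i ω) (V j ω) : ℝ) ∂P = 0) :
    ∫ ω, ‖∑ j, V j ω‖ ^ 2 ∂P ≤ m * K ^ 2 := by
  have hint : ∀ i j : Fin m, Integrable (fun ω => (inner ℝ (V i ω) (V j ω) : ℝ)) P := by
    intro i j
    refine Integrable.mono' (integrable_const (C * C))
      ((hmeas i).inner (hmeas j)) (Filter.Eventually.of_forall fun ω => ?_)
    calc ‖(inner ℝ (V i ω) (V j ω) : ℝ)‖ ≤ ‖V i ω‖ * ‖V j ω‖ := norm_inner_le_norm _ _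
      _ ≤ C * C := mul_le_mul (hbdd i ω) (hbdd j ω) (norm_nonneg _) hC
  have hexp : ∀ ω, ‖∑ j, V j ω‖ ^ 2 = ∑ i, ∑ j, (inner ℝ (V i ω) (V j ω) : ℝ) := by
    intro ω
    rw [← real_inner_self_eq_norm_sq, sum_inner]
    exact Finset.sum_congr rfl fun i _ => inner_sum _ _ _
  calc ∫ ω, ‖∑ j, V j ω‖ ^ 2 ∂P
      = ∑ i, ∑ j, ∫ ω, (inner ℝ (V i ω) (V j ω) : ℝ) ∂P := by
        rw [integral_congr_ae (Filter.Eventually.of_forall hexp),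
          integral_finset_sum _ (fun i _ => integrable_finset_sum _ (fun j _ => hint i j))]
        exact Finset.sum_congr rfl fun i _ => integral_finset_sum _ (fun j _ => hint i j)
    _ = ∑ i : Fin m, ∫ ω, (inner ℝ (V i ω) (V i ω) : ℝ) ∂P := by
        refine Finset.sum_congr rfl fun i _ => ?_
        rw [Finset.sum_eq_single i (fun j _ hj => hcross i j (Ne.symm hj)) (by simp)]
    _ ≤ ∑ i : Fin m, K ^ 2 := by
        refine Finset.sum_le_sum fun i _ => ?_
        calc ∫ ω, (inner ℝ (V i ω) (V i ω) : ℝ) ∂P = ∫ ω, ‖V i ω‖ ^ 2 ∂P := by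
              refine integral_congr_ae (Filter.Eventually.of_forall fun ω => ?_)
              show (inner ℝ (V i ω) (V i ω) : ℝ) = ‖V i ω‖ ^ 2
              rw [real_inner_self_eq_norm_sq]
          _ ≤ K ^ 2 := hdiag i
    _ = m * K ^ 2 := by simp [mul_comm]

lemma abs_coord_le {d : ℕ} (x : EuclideanSpace ℝ (Fin d)) (k : Fin d) : |x k| ≤ ‖x‖ := by
  have h : (x k : ℝ) = inner ℝ (EuclideanSpace.single k (1:ℝ)) x := by
    rw [EuclideanSpace.inner_single_left]; simp
  rw [h]
  refine (abs_real_inner_le_norm _ _).trans ?_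
  rw [EuclideanSpace.norm_single]
  simp

lemma indep_inner_integral {Ω : Type*} [MeasurableSpace Ω] (P : Measure Ω)
    [IsProbabilityMeasure P] {d : ℕ} (X Y : Ω → EuclideanSpace ℝ (Fin d))
    (hX : Measurable X) (hY : Measurable Y) (hXY : IndepFun X Y P)
    (C : ℝ) (hC : 0 ≤ C) (hbX : ∀ ω, ‖X ω‖ ≤ C) (hbY : ∀ ω, ‖Y ω‖ ≤ C)
    (hmX : ∫ ω, X ω ∂P = 0) (hmY : ∫ ω, Y ω ∂P = 0) :
    ∫ ω, (inner ℝ (X ω) (Y ω) : ℝ) ∂P = 0 := by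
  have hprojmeas : ∀ k : Fin d, Measurable fun v : EuclideanSpace ℝ (Fin d) => v k :=
    fun k => (EuclideanSpace.proj (𝕜 := ℝ) k).continuous.measurable
  have hintX : Integrable X P :=
    Integrable.mono' (integrable_const C) hX.aestronglyMeasurable
      (Filter.Eventually.of_forall hbX)
  have hintY : Integrable Y P :=
    Integrable.mono' (integrable_const C) hY.aestronglyMeasurable
      (Filter.Eventually.of_forall hbY)
  have hcompX : ∀ k, Integrable (fun ω => X ω k) P := fun k =>
    ((EuclideanSpace.proj (𝕜 := ℝ) k).integrable_comp hintX)
  have hcompY : ∀ k, Integrable (fun ω => Y ω k) P := fun k =>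
    ((EuclideanSpace.proj (𝕜 := ℝ) k).integrable_comp hintY)
  have hmeanX : ∀ k, ∫ ω, X ω k ∂P = 0 := by
    intro k
    have := (EuclideanSpace.proj (𝕜 := ℝ) k).integral_comp_comm hintX
    simpa [hmX] using this
  have hmeanY : ∀ k, ∫ ω, Y ω k ∂P = 0 := by
    intro k
    have := (EuclideanSpace.proj (𝕜 := ℝ) k).integral_comp_comm hintY
    simpa [hmY] using this
  have hinner : ∀ ω, (inner ℝ (X ω) (Y ω) : ℝ) = ∑ k, X ω k * Y ω k := by
    intro ω
    simp [PiLp.inner_apply, RCLike.inner_apply, mul_comm]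
  rw [integral_congr_ae (Filter.Eventually.of_forall hinner), integral_finset_sum]
  · refine Finset.sum_eq_zero fun k _ => ?_
    have hind : IndepFun (fun ω => X ω k) (fun ω => Y ω k) P :=
      hXY.comp (hprojmeas k) (hprojmeas k)
    have h2 := hind.integral_mul_eq_mul_integral (hcompX k).aestronglyMeasurable (hcompY k).aestronglyMeasurable
    simpa [Pi.mul_apply, hmeanX k, hmeanY k] using h2
  · intro k _
    refine Integrable.mono' (integrable_const (C * C))
      (((hprojmeas k).comp hX).aestronglyMeasurable.mul
        ((hprojmeas k).comp hY).aestronglyMeasurable)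
      (Filter.Eventually.of_forall fun ω => ?_)
    rw [Real.norm_eq_abs, abs_mul]
    exact mul_le_mul ((abs_coord_le _ k).trans (hbX ω)) ((abs_coord_le _ k).trans (hbY ω))
      (abs_nonneg _) hC

lemma centered_sq_le {α : Type*} [MeasurableSpace α] (μ : Measure α) [IsProbabilityMeasure μ]
    {E : Type*} [NormedAddCommGroup E] [InnerProductSpace ℝ E] [CompleteSpace E]
    (g : α → E) (K : ℝ) (hK : 0 ≤ K)
    (hmeas : AEStronglyMeasurable g μ) (hb : ∀ z, ‖g z‖ ≤ K) :
    ∫ z, ‖g z - ∫ w, g w ∂μ‖ ^ 2 ∂μ ≤ K ^ 2 := by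
  set A := ∫ w, g w ∂μ with hA
  have hint : Integrable g μ :=
    Integrable.mono' (integrable_const K) hmeas (Filter.Eventually.of_forall hb)
  have hsqint : Integrable (fun z => ‖g z‖ ^ 2) μ :=
    Integrable.mono' (integrable_const (K ^ 2)) ((hmeas.norm).pow 2)
      (Filter.Eventually.of_forall fun z => by
        rw [Real.norm_eq_abs, abs_of_nonneg (by positivity)]
        exact pow_le_pow_left₀ (norm_nonneg _) (hb z) 2)
  have hinint : Integrable (fun z => (inner ℝ A (g z) : ℝ)) μ :=
    Integrable.mono' (integrable_const (‖A‖ * K)) (AEStronglyMeasurable.inner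
      aestronglyMeasurable_const hmeas)
      (Filter.Eventually.of_forall fun z => by
        refine (norm_inner_le_norm _ _).trans ?_
        exact mul_le_mul_of_nonneg_left (hb z) (norm_nonneg _))
  have hexp : ∀ z, ‖g z - A‖ ^ 2 = ‖g z‖ ^ 2 - 2 * (inner ℝ A (g z) : ℝ) + ‖A‖ ^ 2 := by
    intro z
    rw [norm_sub_sq_real, real_inner_comm]
  rw [integral_congr_ae (Filter.Eventually.of_forall hexp)]
  have hmul : Integrable (fun z => 2 * (inner ℝ A (g z) : ℝ)) μ := hinint.const_mul 2
  have hsub : Integrable (fun z => ‖g z‖ ^ 2 - 2 * (inner ℝ A (g z) : ℝ)) μ := hsqint.sub hmul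
  rw [integral_add hsub (integrable_const _), integral_sub hsqint hmul,
    integral_const_mul, integral_inner hint A]
  have h1 : ∫ z, ‖g z‖ ^ 2 ∂μ ≤ K ^ 2 := by
    calc ∫ z, ‖g z‖ ^ 2 ∂μ ≤ ∫ _, K ^ 2 ∂μ :=
          integral_mono hsqint (integrable_const _)
            (fun z => pow_le_pow_left₀ (norm_nonneg _) (hb z) 2)
      _ = K ^ 2 := by simp
  have h2 : (inner ℝ A A : ℝ) = ‖A‖ ^ 2 := real_inner_self_eq_norm_sq A
  have h3 : (0:ℝ) ≤ ‖A‖ ^ 2 := by positivity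
  simp only [integral_const, measure_univ, ENNReal.toReal_one, one_smul, smul_eq_mul, probReal_univ, ← hA]
  linarith

lemma map_integral_eq {Ω : Type*} [MeasurableSpace Ω] {P : Measure Ω} {α : Type*}
    [MeasurableSpace α] {G : Type*} [NormedAddCommGroup G] [NormedSpace ℝ G]
    (Z : Ω → α) (hZ : Measurable Z) (μ : Measure α) (hlaw : Measure.map Z P = μ)
    (F : α → G) (hF : AEStronglyMeasurable F μ) :
    ∫ ω, F (Z ω) ∂P = ∫ z, F z ∂μ := by
  subst hlaw
  exact (integral_map hZ.aemeasurable hF).symm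

end Aux

set_option maxHeartbeats 1000000 in
/-- Monte Carlo approximation of the Schrödinger–Föllmer drift: if `ξ ≤ f ≤ ζ` with
`0 < ξ`, `f` and `∇f` are `γ`-Lipschitz, and `Z₁, …, Z_m` are i.i.d. `N(0, I_d)`, then
`E ‖b(x,t) - b̃_m(x,t)‖² ≤ (4d/m) (γ⁴/ξ⁴ + γ²ζ²/ξ⁴)`, uniformly in `x` and `t ∈ [0,1]`. -/
theorem stmt13 {d : ℕ} (f : EuclideanSpace ℝ (Fin d) → ℝ)
    (hf : ContDiff ℝ 1 f)
    (ξ ζ γ : ℝ) (hξ : 0 < ξ) (hξζ : ξ ≤ ζ)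
    (hbound : ∀ x, f x ∈ Set.Icc ξ ζ)
    (hfl : ∀ x y, |f x - f y| ≤ γ * ‖x - y‖)
    (hgl : ∀ x y, ‖gradient f x - gradient f y‖ ≤ γ * ‖x - y‖)
    (σ : ℝ) (hσ : σ ∈ Set.Ioc (0:ℝ) 1)
    (m : ℕ) (hm : 0 < m)
    {Ω : Type*} [MeasurableSpace Ω] (P : Measure Ω) [IsProbabilityMeasure P]
    (Z : Fin m → Ω → EuclideanSpace ℝ (Fin d))
    (hZmeas : ∀ j, Measurable (Z j))
    (hZindep : iIndepFun Z P)
    (hZlaw : ∀ j, Measure.map (Z j) P = stdGaussian d) :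
    ∀ x : EuclideanSpace ℝ (Fin d), ∀ t ∈ Set.Icc (0:ℝ) 1,
      ∫ ω, ‖driftSF f σ x t -
          ((m : ℝ)⁻¹ * ∑ j, f (x + Real.sqrt ((1 - t) * σ) • Z j ω))⁻¹ •
            ((m : ℝ)⁻¹ • ∑ j, gradient f (x + Real.sqrt ((1 - t) * σ) • Z j ω))‖ ^ 2 ∂P ≤
        (4 * d / m) * (γ ^ 4 / ξ ^ 4 + γ ^ 2 * ζ ^ 2 / ξ ^ 4) := by
  intro x t ht
  rcases Nat.eq_zero_or_pos d with hd0 | hd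
  · subst hd0
    have h0 : ∀ ω : Ω, ‖driftSF f σ x t -
        ((m : ℝ)⁻¹ * ∑ j, f (x + Real.sqrt ((1 - t) * σ) • Z j ω))⁻¹ •
          ((m : ℝ)⁻¹ • ∑ j, gradient f (x + Real.sqrt ((1 - t) * σ) • Z j ω))‖ ^ 2 = 0 := by
      intro ω
      rw [Subsingleton.elim (driftSF f σ x t -
        ((m : ℝ)⁻¹ * ∑ j, f (x + Real.sqrt ((1 - t) * σ) • Z j ω))⁻¹ •
          ((m : ℝ)⁻¹ • ∑ j, gradient f (x + Real.sqrt ((1 - t) * σ) • Z j ω)))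
        (0 : EuclideanSpace ℝ (Fin 0))]
      simp
    rw [integral_congr_ae (Filter.Eventually.of_forall h0), integral_zero]
    positivity
  -- main case
  haveI : IsProbabilityMeasure (stdGaussian d) := stdGaussian_isProb d
  set c := Real.sqrt ((1 - t) * σ) with hc
  set μ := stdGaussian d with hμ
  have hm0 : (m:ℝ) ≠ 0 := Nat.cast_ne_zero.2 hm.ne'
  have hmpos : (0:ℝ) < m := Nat.cast_pos.2 hm
  -- basic analytic facts
  have hγ0 : 0 ≤ γ := by
    have h1 := hfl (EuclideanSpace.single (⟨0, hd⟩ : Fin d) (1:ℝ)) 0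
    have h2 : (0:ℝ) ≤ γ * ‖EuclideanSpace.single (⟨0, hd⟩ : Fin d) (1:ℝ) - 0‖ :=
      le_trans (abs_nonneg _) h1
    rw [sub_zero, EuclideanSpace.norm_single] at h2
    simpa using h2
  have haff : Continuous fun z : EuclideanSpace ℝ (Fin d) => x + c • z :=
    continuous_const.add (continuous_id.const_smul c)
  have hgradcont : Continuous (gradient f) := by
    have h1 : Continuous (fderiv ℝ f) := hf.continuous_fderiv (by norm_num)
    exact (InnerProductSpace.toDual ℝ
      (EuclideanSpace ℝ (Fin d))).symm.continuous.comp h1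
  have hlip : LipschitzWith (Real.toNNReal γ) f := by
    refine lipschitzWith_iff_dist_le_mul.2 fun a b => ?_
    rw [Real.dist_eq, dist_eq_norm, Real.coe_toNNReal _ hγ0]
    exact hfl a b
  have hgradb : ∀ z, ‖gradient f z‖ ≤ γ := by
    intro z
    have h1 : ‖fderiv ℝ f z‖ ≤ γ := by
      have h2 := norm_fderiv_le_of_lipschitz ℝ (x₀ := z) hlip
      rwa [Real.coe_toNNReal _ hγ0] at h2
    calc ‖gradient f z‖ = ‖fderiv ℝ f z‖ := LinearIsometryEquiv.norm_map _ _
      _ ≤ γ := h1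
  have hcg : Continuous fun z : EuclideanSpace ℝ (Fin d) => gradient f (x + c • z) :=
    hgradcont.comp haff
  have hch : Continuous fun z : EuclideanSpace ℝ (Fin d) => f (x + c • z) :=
    hf.continuous.comp haff
  have hgb : ∀ z : EuclideanSpace ℝ (Fin d), ‖gradient f (x + c • z)‖ ≤ γ :=
    fun z => hgradb _
  have habs : ∀ y, |f y| ≤ ζ := fun y =>
    abs_le.2 ⟨by linarith [(hbound y).1], (hbound y).2⟩
  -- population quantities
  set A := ∫ z, gradient f (x + c • z) ∂μ with hA
  set B := ∫ z, f (x + c • z) ∂μ with hB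
  have hgint : Integrable (fun z => gradient f (x + c • z)) μ :=
    Integrable.mono' (integrable_const γ) hcg.aestronglyMeasurable
      (Filter.Eventually.of_forall hgb)
  have hhint : Integrable (fun z => f (x + c • z)) μ :=
    Integrable.mono' (integrable_const ζ) hch.aestronglyMeasurable
      (Filter.Eventually.of_forall fun z => by rw [Real.norm_eq_abs]; exact habs _)
  have hBl : ξ ≤ B := by
    have h1 := integral_mono (integrable_const ξ) hhint (fun z => (hbound _).1)
    simpa using h1
  have hAb : ‖A‖ ≤ γ := by
    refine (norm_integral_le_of_norm_le (integrable_const γ)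
      (Filter.Eventually.of_forall fun z => hgb z)).trans ?_
    simp
  have hdrift : driftSF f σ x t = B⁻¹ • A := rfl
  -- random variables and transfers
  have hYmean : ∀ j, ∫ ω, gradient f (x + c • Z j ω) ∂P = A := by
    intro j
    have h1 := map_integral_eq (Z j) (hZmeas j) μ (hZlaw j)
      (fun z => gradient f (x + c • z)) hcg.aestronglyMeasurable
    rw [h1, ← hA]
  have hWmean : ∀ j, ∫ ω, f (x + c • Z j ω) ∂P = B := by
    intro j
    have h1 := map_integral_eq (Z j) (hZmeas j) μ (hZlaw j)
      (fun z => f (x + c • z)) hch.aestronglyMeasurable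
    rw [h1, ← hB]
  have hYint : ∀ j, Integrable (fun ω => gradient f (x + c • Z j ω)) P := fun j =>
    Integrable.mono' (integrable_const γ)
      (hcg.measurable.comp (hZmeas j)).aestronglyMeasurable
      (Filter.Eventually.of_forall fun ω => hgb _)
  have hWint : ∀ j, Integrable (fun ω => f (x + c • Z j ω)) P := fun j =>
    Integrable.mono' (integrable_const ζ)
      (hch.measurable.comp (hZmeas j)).aestronglyMeasurable
      (Filter.Eventually.of_forall fun ω => by rw [Real.norm_eq_abs]; exact habs _)
  have hVmean : ∀ j, ∫ ω, (gradient f (x + c • Z j ω) - A) ∂P = 0 := by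
    intro j
    rw [integral_sub (hYint j) (integrable_const A), hYmean j, integral_const]
    simp
  have hUmean : ∀ j, ∫ ω, (f (x + c • Z j ω) - B) ∂P = 0 := by
    intro j
    rw [integral_sub (hWint j) (integrable_const B), hWmean j, integral_const]
    simp
  -- second moment bound for gradient part
  have hI1 : ∫ ω, ‖∑ j, (gradient f (x + c • Z j ω) - A)‖ ^ 2 ∂P ≤ m * γ ^ 2 := by
    refine sum_var_bound P m (fun j ω => gradient f (x + c • Z j ω) - A)
      (2 * γ) γ (by linarith) hγ0
      (fun j => ((hcg.measurable.comp (hZmeas j)).sub measurable_const).aestronglyMeasurable)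
      (fun j ω => ?_) (fun j => ?_) (fun i j hij => ?_)
    · exact (norm_sub_le _ _).trans (by have := hgb (Z j ω); have := hAb; linarith)
    · have h1 := map_integral_eq (Z j) (hZmeas j) μ (hZlaw j)
        (fun z => ‖gradient f (x + c • z) - A‖ ^ 2)
        (((hcg.sub continuous_const).norm.pow 2).aestronglyMeasurable)
      rw [h1]
      have h2 := centered_sq_le μ (fun z => gradient f (x + c • z)) γ hγ0
        hcg.aestronglyMeasurable hgb
      rwa [← hA] at h2
    · refine indep_inner_integral P _ _
        ((hcg.measurable.comp (hZmeas i)).sub measurable_const)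
        ((hcg.measurable.comp (hZmeas j)).sub measurable_const)
        ((hZindep.indepFun hij).comp (hcg.measurable.sub measurable_const)
          (hcg.measurable.sub measurable_const))
        (2 * γ) (by linarith) (fun ω => ?_) (fun ω => ?_) (hVmean i) (hVmean j)
      · exact (norm_sub_le (gradient f (x + c • Z i ω)) A).trans (by have := hgb (Z i ω); have := hAb; linarith)
      · exact (norm_sub_le (gradient f (x + c • Z j ω)) A).trans (by have := hgb (Z j ω); have := hAb; linarith)
  -- second moment bound for scalar part
  have hI2 : ∫ ω, (∑ j, (f (x + c • Z j ω) - B)) ^ 2 ∂P ≤ m * ζ ^ 2 := by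
    have hζ0 : 0 ≤ ζ := le_trans hξ.le hξζ
    have hBa : |B| ≤ ζ := by
      rw [abs_of_pos (lt_of_lt_of_le hξ hBl)]
      have h1 := integral_mono hhint (integrable_const ζ) (fun z => (hbound _).2)
      simpa using h1
    have key := sum_var_bound P (E := ℝ) m (fun j ω => f (x + c • Z j ω) - B)
      (2 * ζ) ζ (by linarith) hζ0
      (fun j => ((hch.measurable.comp (hZmeas j)).sub measurable_const).aestronglyMeasurable)
      (fun j ω => by
        rw [Real.norm_eq_abs]
        have h2 := abs_sub (f (x + c • Z j ω)) B
        have := habs (x + c • Z j ω)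
        calc |f (x + c • Z j ω) - B| ≤ |f (x + c • Z j ω)| + |B| := abs_sub _ _
          _ ≤ 2 * ζ := by linarith)
      (fun i => ?_) (fun i j hij => ?_)
    · calc ∫ ω, (∑ j, (f (x + c • Z j ω) - B)) ^ 2 ∂P
          = ∫ ω, ‖∑ j, (f (x + c • Z j ω) - B)‖ ^ 2 ∂P := by
            refine integral_congr_ae (Filter.Eventually.of_forall fun ω => ?_)
            show (∑ j, (f (x + c • Z j ω) - B)) ^ 2 = ‖∑ j, (f (x + c • Z j ω) - B)‖ ^ 2
            rw [Real.norm_eq_abs, sq_abs]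
        _ ≤ m * ζ ^ 2 := key
    · -- diagonal
      have h1 := map_integral_eq (Z i) (hZmeas i) μ (hZlaw i)
        (fun z => ‖f (x + c • z) - B‖ ^ 2)
        (((hch.sub continuous_const).norm.pow 2).aestronglyMeasurable)
      rw [h1]
      have h2 := centered_sq_le μ (E := ℝ) (fun z => f (x + c • z)) ζ hζ0
        hch.aestronglyMeasurable (fun z => by rw [Real.norm_eq_abs]; exact habs _)
      rwa [← hB] at h2
    · -- cross
      have hφ : Measurable fun z : EuclideanSpace ℝ (Fin d) => f (x + c • z) - B :=
        hch.measurable.sub measurable_const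
      have hind : IndepFun (fun ω => f (x + c • Z i ω) - B)
          (fun ω => f (x + c • Z j ω) - B) P :=
        (hZindep.indepFun hij).comp hφ hφ
      have hiint : ∀ k, Integrable (fun ω => f (x + c • Z k ω) - B) P := fun k =>
        (hWint k).sub (integrable_const B)
      have h2 := hind.integral_mul_eq_mul_integral (hiint i).aestronglyMeasurable (hiint j).aestronglyMeasurable
      have h3 : ∫ ω, (inner ℝ (f (x + c • Z i ω) - B) (f (x + c • Z j ω) - B) : ℝ) ∂P
          = ∫ ω, (f (x + c • Z i ω) - B) * (f (x + c • Z j ω) - B) ∂P := by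
        refine integral_congr_ae (Filter.Eventually.of_forall fun ω => ?_)
        simp [RCLike.inner_apply, mul_comm]
      rw [h3]
      simpa [Pi.mul_apply, hUmean i, hUmean j] using h2
  -- pointwise sample bounds
  have hBhmem : ∀ ω, ξ ≤ (m:ℝ)⁻¹ * ∑ j, f (x + c • Z j ω) ∧
      (m:ℝ)⁻¹ * ∑ j, f (x + c • Z j ω) ≤ ζ := by
    intro ω
    have hlo : (m:ℝ) * ξ ≤ ∑ j, f (x + c • Z j ω) := by
      have h1 := Finset.sum_le_sum (s := Finset.univ) (f := fun _ : Fin m => ξ)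
        (g := fun j : Fin m => f (x + c • Z j ω)) (fun j _ => (hbound _).1)
      simpa [Finset.sum_const, Finset.card_univ, mul_comm] using h1
    have hhi : ∑ j, f (x + c • Z j ω) ≤ (m:ℝ) * ζ := by
      have h1 := Finset.sum_le_sum (s := Finset.univ) (f := fun j : Fin m => f (x + c • Z j ω))
        (g := fun _ : Fin m => ζ) (fun j _ => (hbound _).2)
      simpa [Finset.sum_const, Finset.card_univ, mul_comm] using h1
    constructor
    · have h2 := mul_le_mul_of_nonneg_left hlo (inv_nonneg.2 hmpos.le)
      calc ξ = (m:ℝ)⁻¹ * ((m:ℝ) * ξ) := by field_simp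
        _ ≤ _ := h2
    · have h2 := mul_le_mul_of_nonneg_left hhi (inv_nonneg.2 hmpos.le)
      calc (m:ℝ)⁻¹ * ∑ j, f (x + c • Z j ω) ≤ (m:ℝ)⁻¹ * ((m:ℝ) * ζ) := h2
        _ = ζ := by field_simp
  have hYhb : ∀ ω, ‖(m:ℝ)⁻¹ • ∑ j, gradient f (x + c • Z j ω)‖ ≤ γ := by
    intro ω
    rw [norm_smul, Real.norm_eq_abs, abs_of_nonneg (inv_nonneg.2 hmpos.le)]
    have h1 : ‖∑ j, gradient f (x + c • Z j ω)‖ ≤ (m:ℝ) * γ := by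
      refine (norm_sum_le _ _).trans ?_
      have h2 := Finset.sum_le_sum (s := Finset.univ) (f := fun j : Fin m => ‖gradient f (x + c • Z j ω)‖)
        (g := fun _ : Fin m => γ) (fun j _ => hgb _)
      simpa [Finset.sum_const, Finset.card_univ, mul_comm] using h2
    calc (m:ℝ)⁻¹ * ‖∑ j, gradient f (x + c • Z j ω)‖ ≤ (m:ℝ)⁻¹ * ((m:ℝ) * γ) :=
          mul_le_mul_of_nonneg_left h1 (inv_nonneg.2 hmpos.le)
      _ = γ := by field_simp
  -- pointwise main inequality
  have hpt : ∀ ω, ‖driftSF f σ x t -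
      ((m:ℝ)⁻¹ * ∑ j, f (x + c • Z j ω))⁻¹ •
        ((m:ℝ)⁻¹ • ∑ j, gradient f (x + c • Z j ω))‖ ^ 2 ≤
      2 * ξ⁻¹ ^ 2 * ‖((m:ℝ)⁻¹ • ∑ j, gradient f (x + c • Z j ω)) - A‖ ^ 2 +
      2 * γ ^ 2 * ξ⁻¹ ^ 4 * (((m:ℝ)⁻¹ * ∑ j, f (x + c • Z j ω)) - B) ^ 2 := by
    intro ω
    rw [hdrift]
    exact ratio_bound A _ B _ ξ γ hξ hBl (hBhmem ω).1 (hYhb ω)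
  -- measurability of the sample means
  have hYhmeas : Measurable fun ω => (m:ℝ)⁻¹ • ∑ j, gradient f (x + c • Z j ω) :=
    (Finset.measurable_fun_sum Finset.univ fun j _ =>
      hcg.measurable.comp (hZmeas j)).fun_const_smul _
  have hBhmeas : Measurable fun ω => (m:ℝ)⁻¹ * ∑ j, f (x + c • Z j ω) :=
    (Finset.measurable_fun_sum Finset.univ fun j _ =>
      hch.measurable.comp (hZmeas j)).const_mul _
  -- integrability of the majorant
  have hG1int : Integrable (fun ω =>
      ‖((m:ℝ)⁻¹ • ∑ j, gradient f (x + c • Z j ω)) - A‖ ^ 2) P := by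
    refine Integrable.mono' (integrable_const ((2*γ) ^ 2))
      (((hYhmeas.sub measurable_const).norm.pow_const 2).aestronglyMeasurable)
      (Filter.Eventually.of_forall fun ω => ?_)
    rw [Real.norm_eq_abs, abs_of_nonneg (by positivity)]
    refine pow_le_pow_left₀ (norm_nonneg _) ?_ 2
    exact (norm_sub_le _ _).trans (by have := hYhb ω; have := hAb; linarith)
  have hG2int : Integrable (fun ω =>
      (((m:ℝ)⁻¹ * ∑ j, f (x + c • Z j ω)) - B) ^ 2) P := by
    have hBa : B ≤ ζ := by
      have h1 := integral_mono hhint (integrable_const ζ) (fun z => (hbound _).2)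
      simpa using h1
    refine Integrable.mono' (integrable_const ((ζ - ξ) ^ 2))
      (((hBhmeas.sub measurable_const).pow_const 2).aestronglyMeasurable)
      (Filter.Eventually.of_forall fun ω => ?_)
    rw [Real.norm_eq_abs, abs_of_nonneg (by positivity), ← sq_abs]
    refine pow_le_pow_left₀ (abs_nonneg _) ?_ 2
    rw [abs_sub_le_iff]
    constructor
    · linarith [(hBhmem ω).2, hBl]
    · linarith [(hBhmem ω).1, hBa]
  -- rewrite sample deviation via centered sums
  have hYc : ∀ ω, ((m:ℝ)⁻¹ • ∑ j, gradient f (x + c • Z j ω)) - A =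
      (m:ℝ)⁻¹ • ∑ j, (gradient f (x + c • Z j ω) - A) := by
    intro ω
    rw [Finset.sum_sub_distrib, smul_sub]
    congr 1
    rw [Finset.sum_const, Finset.card_univ, Fintype.card_fin,
      ← Nat.cast_smul_eq_nsmul ℝ, smul_smul, inv_mul_cancel₀ hm0, one_smul]
  have hBc : ∀ ω, ((m:ℝ)⁻¹ * ∑ j, f (x + c • Z j ω)) - B =
      (m:ℝ)⁻¹ * ∑ j, (f (x + c • Z j ω) - B) := by
    intro ω
    rw [Finset.sum_sub_distrib, mul_sub]
    congr 1
    rw [Finset.sum_const, Finset.card_univ, Fintype.card_fin, nsmul_eq_mul]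
    field_simp
  have hJ1 : ∫ ω, ‖((m:ℝ)⁻¹ • ∑ j, gradient f (x + c • Z j ω)) - A‖ ^ 2 ∂P ≤
      γ ^ 2 / m := by
    have he : ∀ ω, ‖((m:ℝ)⁻¹ • ∑ j, gradient f (x + c • Z j ω)) - A‖ ^ 2 =
        ((m:ℝ)⁻¹) ^ 2 * ‖∑ j, (gradient f (x + c • Z j ω) - A)‖ ^ 2 := by
      intro ω
      rw [hYc ω, norm_smul, Real.norm_eq_abs, abs_of_nonneg (inv_nonneg.2 hmpos.le), mul_pow]
    rw [integral_congr_ae (Filter.Eventually.of_forall he), integral_const_mul]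
    calc ((m:ℝ)⁻¹) ^ 2 * ∫ ω, ‖∑ j, (gradient f (x + c • Z j ω) - A)‖ ^ 2 ∂P
        ≤ ((m:ℝ)⁻¹) ^ 2 * ((m:ℝ) * γ ^ 2) :=
          mul_le_mul_of_nonneg_left hI1 (by positivity)
      _ = γ ^ 2 / m := by field_simp
  have hJ2 : ∫ ω, (((m:ℝ)⁻¹ * ∑ j, f (x + c • Z j ω)) - B) ^ 2 ∂P ≤ ζ ^ 2 / m := by
    have he : ∀ ω, (((m:ℝ)⁻¹ * ∑ j, f (x + c • Z j ω)) - B) ^ 2 =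
        ((m:ℝ)⁻¹) ^ 2 * (∑ j, (f (x + c • Z j ω) - B)) ^ 2 := by
      intro ω
      rw [hBc ω, mul_pow]
    rw [integral_congr_ae (Filter.Eventually.of_forall he), integral_const_mul]
    calc ((m:ℝ)⁻¹) ^ 2 * ∫ ω, (∑ j, (f (x + c • Z j ω) - B)) ^ 2 ∂P
        ≤ ((m:ℝ)⁻¹) ^ 2 * ((m:ℝ) * ζ ^ 2) :=
          mul_le_mul_of_nonneg_left hI2 (by positivity)
      _ = ζ ^ 2 / m := by field_simp
  -- put everything together
  have hmain : ∫ ω, ‖driftSF f σ x t -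
      ((m:ℝ)⁻¹ * ∑ j, f (x + c • Z j ω))⁻¹ •
        ((m:ℝ)⁻¹ • ∑ j, gradient f (x + c • Z j ω))‖ ^ 2 ∂P ≤
      2 * ξ⁻¹ ^ 2 * (γ ^ 2 / m) + 2 * γ ^ 2 * ξ⁻¹ ^ 4 * (ζ ^ 2 / m) := by
    have hstep : ∫ ω, ‖driftSF f σ x t -
        ((m:ℝ)⁻¹ * ∑ j, f (x + c • Z j ω))⁻¹ •
          ((m:ℝ)⁻¹ • ∑ j, gradient f (x + c • Z j ω))‖ ^ 2 ∂P ≤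
        ∫ ω, (2 * ξ⁻¹ ^ 2 * ‖((m:ℝ)⁻¹ • ∑ j, gradient f (x + c • Z j ω)) - A‖ ^ 2 +
          2 * γ ^ 2 * ξ⁻¹ ^ 4 * (((m:ℝ)⁻¹ * ∑ j, f (x + c • Z j ω)) - B) ^ 2) ∂P := by
      refine integral_mono_of_nonneg (Filter.Eventually.of_forall fun ω => by positivity)
        ((hG1int.const_mul _).add (hG2int.const_mul _))
        (Filter.Eventually.of_forall hpt)
    refine hstep.trans ?_
    rw [integral_add (hG1int.const_mul _) (hG2int.const_mul _),
      integral_const_mul, integral_const_mul]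
    refine add_le_add (mul_le_mul_of_nonneg_left hJ1 (by positivity))
      (mul_le_mul_of_nonneg_left hJ2 (by positivity))
  refine hmain.trans ?_
  -- final arithmetic
  have hd1 : (1:ℝ) ≤ d := by exact_mod_cast hd
  have hkey : ξ⁻¹ ^ 2 * γ ^ 2 ≤ γ ^ 2 * ζ ^ 2 / ξ ^ 4 := by
    rw [inv_pow, ← one_div, div_mul_eq_mul_div, div_le_div_iff₀ (by positivity) (by positivity)]
    nlinarith [mul_le_mul_of_nonneg_left
      (mul_self_le_mul_self hξ.le hξζ) (mul_nonneg (sq_nonneg γ) (mul_pos hξ hξ).le)]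
  calc 2 * ξ⁻¹ ^ 2 * (γ ^ 2 / m) + 2 * γ ^ 2 * ξ⁻¹ ^ 4 * (ζ ^ 2 / m)
      ≤ 2 * (γ ^ 2 * ζ ^ 2 / ξ ^ 4) / m + 2 * (γ ^ 2 * ζ ^ 2 / ξ ^ 4) / m := by
        refine add_le_add ?_ (le_of_eq (by field_simp))
        rw [show 2 * ξ⁻¹ ^ 2 * (γ ^ 2 / m) = 2 * (ξ⁻¹ ^ 2 * γ ^ 2) / m by ring]
        gcongr
    _ = (4 * 1 / m) * (γ ^ 2 * ζ ^ 2 / ξ ^ 4) := by ring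
    _ ≤ (4 * d / m) * (γ ^ 4 / ξ ^ 4 + γ ^ 2 * ζ ^ 2 / ξ ^ 4) := by
        refine mul_le_mul ?_ (le_add_of_nonneg_left (by positivity)) (by positivity) (by positivity)
        gcongr <;> first | exact hd1 | norm_num
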